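/- arXiv:1012.4982 — 6 statements merged into one kernel-verified Lean document; each statement's English description precedes it below -/
import Mathlib

section
/- Let η be a real polynomial of degree at most 2, let a < b be real numbers, and set m = (a + b)/2. Then ((b − a)/6)·( η(a)² + 4 η(m)² + η(b)² ) ≤ (5/2) ∫_a^b η(x)² dx. -/
/-- Single-interval core of Lemma 3.4(i): the Simpson quadrature of the square
of a quadratic polynomial is bounded by `5/2` times its exact L² norm squared. -/
theorem stmt_7 (η : Polynomial ℝ) (hη : η.degree ≤ 2) (a b : ℝ) (hab : a < b) :
    ((b - a) / 6) *
        ((η.eval a) ^ 2 + 4 * (η.eval ((a + b) / 2)) ^ 2 + (η.eval b) ^ 2) ≤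
      (5 / 2) * ∫ x in a..b, (η.eval x) ^ 2 := by
  have h2 : η.natDegree < 3 := by
    have h : η.natDegree ≤ 2 := Polynomial.natDegree_le_iff_degree_le.mpr (by exact_mod_cast hη)
    omega
  set c0 := η.coeff 0 with hc0
  set c1 := η.coeff 1 with hc1
  set c2 := η.coeff 2 with hc2
  have heval : ∀ x : ℝ, η.eval x = c0 + c1 * x + c2 * x ^ 2 := by
    intro x
    rw [Polynomial.eval_eq_sum_range' h2]
    simp [Finset.sum_range_succ]; rfl
  -- antiderivative
  set F : ℝ → ℝ := fun x => c0 ^ 2 * x + c0 * c1 * x ^ 2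
      + (c1 ^ 2 + 2 * c0 * c2) * x ^ 3 / 3 + c1 * c2 * x ^ 4 / 2 + c2 ^ 2 * x ^ 5 / 5
      with hF
  have hderiv : ∀ x ∈ Set.uIcc a b, HasDerivAt F ((η.eval x) ^ 2) x := by
    intro x _
    have h1 : HasDerivAt (fun x : ℝ => x) 1 x := hasDerivAt_id x
    have h2 : HasDerivAt (fun x : ℝ => x ^ 2) (2 * x ^ 1) x := hasDerivAt_pow 2 x
    have h3 : HasDerivAt (fun x : ℝ => x ^ 3) (3 * x ^ 2) x := hasDerivAt_pow 3 x
    have h4 : HasDerivAt (fun x : ℝ => x ^ 4) (4 * x ^ 3) x := hasDerivAt_pow 4 x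
    have h5 : HasDerivAt (fun x : ℝ => x ^ 5) (5 * x ^ 4) x := hasDerivAt_pow 5 x
    have := ((((h1.const_mul (c0 ^ 2)).add (h2.const_mul (c0 * c1))).add
        ((h3.const_mul (c1 ^ 2 + 2 * c0 * c2)).div_const 3)).add
        ((h4.const_mul (c1 * c2)).div_const 2)).add ((h5.const_mul (c2 ^ 2)).div_const 5)
    exact this.congr_deriv (by rw [heval x]; ring)
  have hcont : ContinuousOn (fun x => (η.eval x) ^ 2) (Set.uIcc a b) :=
    (Polynomial.continuous η).pow 2 |>.continuousOn
  have hint : (∫ x in a..b, (η.eval x) ^ 2) = F b - F a :=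
    intervalIntegral.integral_eq_sub_of_hasDerivAt hderiv
      (hcont.intervalIntegrable)
  set x := η.eval a
  set y := η.eval ((a + b) / 2)
  set z := η.eval b
  have hI : (∫ t in a..b, (η.eval t) ^ 2)
      = (b - a) / 15 * (2 * x ^ 2 + 8 * y ^ 2 + 2 * z ^ 2 - x * z + 2 * x * y + 2 * y * z) := by
    rw [hint, hF]
    simp only [x, y, z, heval]
    ring
  rw [hI]
  have hpos : 0 < b - a := by linarith
  nlinarith [mul_nonneg hpos.le (sq_nonneg (x + y - z / 2)),
    mul_nonneg hpos.le (sq_nonneg (y + z / 2))]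
end

section
/- Let η be a real polynomial of degree at most 2, let a < b be real numbers, and set m = (a + b)/2. Then η(m)²·(b − a) ≤ (15/4) ∫_a^b η(x)² dx. -/
open intervalIntegral

lemma quad_integral (p q r a b : ℝ) :
    ∫ x in a..b, (p + q*x + r*x^2)^2
      = p^2*(b-a) + p*q*(b^2-a^2) + (q^2+2*p*r)*(b^3-a^3)/3
        + q*r*(b^4-a^4)/2 + r^2*(b^5-a^5)/5 := by
  have h1 : (fun x : ℝ => (p + q*x + r*x^2)^2)
      = fun x : ℝ => p^2 + (2*p*q)*x^1 + (q^2+2*p*r)*x^2 + (2*q*r)*x^3 + r^2*x^4 := by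
    funext x; ring
  have hint : ∀ (c : ℝ) (n : ℕ), IntervalIntegrable (fun x : ℝ => c * x^n)
      MeasureTheory.volume a b := by
    intro c n
    exact (Continuous.intervalIntegrable (by continuity) a b)
  calc ∫ x in a..b, (p + q*x + r*x^2)^2
      = ∫ x in a..b, (p^2 + (2*p*q)*x^1 + (q^2+2*p*r)*x^2 + (2*q*r)*x^3 + r^2*x^4) := by
        rw [h1]
    _ = (∫ x in a..b, (p^2 + (2*p*q)*x^1 + (q^2+2*p*r)*x^2 + (2*q*r)*x^3))
        + (∫ x in a..b, r^2*x^4) := by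
        exact intervalIntegral.integral_add (Continuous.intervalIntegrable (by continuity) a b)
          (Continuous.intervalIntegrable (by continuity) a b)
    _ = (∫ x in a..b, (p^2 + (2*p*q)*x^1 + (q^2+2*p*r)*x^2))
        + (∫ x in a..b, (2*q*r)*x^3) + (∫ x in a..b, r^2*x^4) := by
        rw [intervalIntegral.integral_add (Continuous.intervalIntegrable (by continuity) a b)
          (Continuous.intervalIntegrable (by continuity) a b)]
    _ = (∫ x in a..b, (p^2 + (2*p*q)*x^1))
        + (∫ x in a..b, (q^2+2*p*r)*x^2) + (∫ x in a..b, (2*q*r)*x^3)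
        + (∫ x in a..b, r^2*x^4) := by
        rw [intervalIntegral.integral_add (Continuous.intervalIntegrable (by continuity) a b)
          (Continuous.intervalIntegrable (by continuity) a b)]
    _ = (∫ x in a..b, (p^2:ℝ)) + (∫ x in a..b, (2*p*q)*x^1)
        + (∫ x in a..b, (q^2+2*p*r)*x^2) + (∫ x in a..b, (2*q*r)*x^3)
        + (∫ x in a..b, r^2*x^4) := by
        rw [intervalIntegral.integral_add (Continuous.intervalIntegrable (by continuity) a b)
          (Continuous.intervalIntegrable (by continuity) a b)]
    _ = _ := by
        rw [intervalIntegral.integral_const, intervalIntegral.integral_const_mul,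
          intervalIntegral.integral_const_mul, intervalIntegral.integral_const_mul,
          intervalIntegral.integral_const_mul, integral_pow, integral_pow, integral_pow,
          integral_pow]
        push_cast
        simp only [smul_eq_mul]
        ring

/-- Midpoint bound from the proof of Lemma 3.5:
`η(m)² (b − a) ≤ (15/4) ∫_a^b η²` for quadratic `η`, `m = (a+b)/2`. -/
theorem stmt_8 (η : Polynomial ℝ) (hη : η.degree ≤ 2) (a b : ℝ) (hab : a < b) :
    (η.eval ((a + b) / 2)) ^ 2 * (b - a) ≤
      (15 / 4) * ∫ x in a..b, (η.eval x) ^ 2 := by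
  set p := η.coeff 0
  set q := η.coeff 1
  set r := η.coeff 2
  have h3 : η.natDegree < 3 :=
    Nat.lt_succ_of_le (Polynomial.natDegree_le_of_degree_le hη)
  have hev : ∀ x : ℝ, η.eval x = p + q*x + r*x^2 := by
    intro x
    rw [Polynomial.eval_eq_sum_range' h3]
    simp [Finset.sum_range_succ]
    rfl
  have hI : ∫ x in a..b, (η.eval x)^2
      = p^2*(b-a) + p*q*(b^2-a^2) + (q^2+2*p*r)*(b^3-a^3)/3
        + q*r*(b^4-a^4)/2 + r^2*(b^5-a^5)/5 := by
    rw [show (fun x : ℝ => (η.eval x)^2) = fun x : ℝ => (p + q*x + r*x^2)^2 by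
      funext x; rw [hev]]
    exact quad_integral p q r a b
  set A := η.eval a with hA
  set B := η.eval b with hB
  set M := η.eval ((a+b)/2) with hM
  have key : 15 * ∫ x in a..b, (η.eval x)^2
      = (b - a) * (2*(A^2 + B^2) + 8*M^2 - A*B + 2*M*(A+B)) := by
    rw [hI, hA, hB, hM, hev a, hev b, hev ((a+b)/2)]
    ring
  have hQ : 4*M^2 ≤ 2*(A^2 + B^2) + 8*M^2 - A*B + 2*M*(A+B) := by
    nlinarith [sq_nonneg (A+M), sq_nonneg (B+M), sq_nonneg (A-B), sq_nonneg A, sq_nonneg B,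
      sq_nonneg M]
  nlinarith [mul_le_mul_of_nonneg_left hQ (le_of_lt (sub_pos.mpr hab)), key]
end

section
/- Let a < b be real numbers, set m = (a + b)/2, let g : [a,b] → ℝ be twice continuously differentiable with g > 0 on [a,b], and let η be a real polynomial of degree at most 2 such that η ≥ 0 on [a,b] or η ≤ 0 on [a,b]. Then | ((b − a)/6)·( g(a)|η(a)| + 4 g(m)|η(m)| + g(b)|η(b)| ) − ∫_a^b g(x)|η(x)| dx | ≤ (1/3)·sup_{t∈[a,b]} |g''(t)| · (b − a)^{5/2} · ( ∫_a^b η(x)² dx )^{1/2}. -/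
open intervalIntegral Polynomial Set

lemma integral_quartic (a b c0 c1 c2 c3 c4 : ℝ) :
    ∫ x in a..b, (c0 + c1*x + c2*x^2 + c3*x^3 + c4*x^4) =
      c0*(b-a) + c1*(b^2-a^2)/2 + c2*(b^3-a^3)/3 + c3*(b^4-a^4)/4 + c4*(b^5-a^5)/5 := by
  have hF : ∀ x : ℝ, HasDerivAt (fun x : ℝ => c0*x + c1*x^2/2 + c2*x^3/3 + c3*x^4/4 + c4*x^5/5)
      (c0 + c1*x + c2*x^2 + c3*x^3 + c4*x^4) x := by
    intro x
    have h1 := (hasDerivAt_id x).const_mul c0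
    have h2 := ((hasDerivAt_pow 2 x).const_mul c1).div_const 2
    have h3 := ((hasDerivAt_pow 3 x).const_mul c2).div_const 3
    have h4 := ((hasDerivAt_pow 4 x).const_mul c3).div_const 4
    have h5 := ((hasDerivAt_pow 5 x).const_mul c4).div_const 5
    have := (((h1.add h2).add h3).add h4).add h5
    refine this.congr_deriv ?_
    · push_cast; ring
  rw [integral_eq_sub_of_hasDerivAt (fun x _ => hF x)
    (by apply Continuous.intervalIntegrable; continuity)]
  ring

lemma simpson_exact (a b : ℝ) (p : Polynomial ℝ) (hp : p.degree ≤ 3) :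
    ∫ x in a..b, p.eval x
      = ((b - a)/6) * (p.eval a + 4 * p.eval ((a+b)/2) + p.eval b) := by
  have hnd : p.natDegree < 4 :=
    lt_of_le_of_lt (Polynomial.natDegree_le_iff_degree_le.2 hp) (by norm_num)
  have hev : ∀ x : ℝ, p.eval x
      = p.coeff 0 + p.coeff 1 * x + p.coeff 2 * x^2 + p.coeff 3 * x^3 + 0 * x^4 := by
    intro x
    rw [Polynomial.eval_eq_sum_range' hnd]
    simp [Finset.sum_range_succ]
  simp only [hev]
  rw [integral_quartic]
  ring

lemma interval_cauchy_schwarz (a b : ℝ) (hab : a ≤ b) (f g : ℝ → ℝ)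
    (hf : Continuous f) (hg : Continuous g) :
    ∫ x in a..b, f x * g x ≤
      Real.sqrt (∫ x in a..b, f x ^ 2) * Real.sqrt (∫ x in a..b, g x ^ 2) := by
  set A := ∫ x in a..b, f x ^ 2 with hA
  set B := ∫ x in a..b, f x * g x with hB
  set C := ∫ x in a..b, g x ^ 2 with hC
  have hint : ∀ h : ℝ → ℝ, Continuous h → IntervalIntegrable h MeasureTheory.volume a b :=
    fun h hh => hh.intervalIntegrable a b
  have hA0 : 0 ≤ A := integral_nonneg hab (fun x _ => sq_nonneg _)
  have hC0 : 0 ≤ C := integral_nonneg hab (fun x _ => sq_nonneg _)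
  have key : ∀ t : ℝ, 0 ≤ A * (t * t) + (2 * B) * t + C := by
    intro t
    have h1 : 0 ≤ ∫ x in a..b, (t * f x + g x) ^ 2 :=
      integral_nonneg hab (fun x _ => sq_nonneg _)
    have h2 : (∫ x in a..b, (t * f x + g x) ^ 2)
        = A * (t * t) + (2 * B) * t + C := by
      have : ∀ x : ℝ, (t * f x + g x) ^ 2
          = (t * t) * f x ^ 2 + (2 * t) * (f x * g x) + g x ^ 2 := by intro x; ring
      simp only [this]
      rw [integral_add (((hint (fun x => f x ^ 2) (hf.pow 2)).const_mul _).add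
            ((hint (fun x => f x * g x) (hf.mul hg)).const_mul _)) (hint (fun x => g x ^ 2) (hg.pow 2)),
          integral_add ((hint (fun x => f x ^ 2) (hf.pow 2)).const_mul _) ((hint (fun x => f x * g x) (hf.mul hg)).const_mul _),
          integral_const_mul, integral_const_mul]
      ring
    linarith [h2 ▸ h1]
  have hdisc := discrim_le_zero key
  rw [discrim] at hdisc
  have hB2 : B ^ 2 ≤ A * C := by nlinarith
  calc B ≤ |B| := le_abs_self B
    _ = Real.sqrt (B ^ 2) := (Real.sqrt_sq_eq_abs B).symm
    _ ≤ Real.sqrt (A * C) := Real.sqrt_le_sqrt hB2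
    _ = Real.sqrt A * Real.sqrt C := Real.sqrt_mul hA0 C

lemma interp_err (a b : ℝ) (hab : a < b) (g : ℝ → ℝ) (hg : ContDiff ℝ 2 g) (M : ℝ)
    (hM : ∀ t ∈ Set.Icc a b, |deriv (deriv g) t| ≤ M)
    (x : ℝ) (hx : x ∈ Set.Icc a b) :
    |g x - (g a + (g b - g a) / (b - a) * (x - a))| ≤ M / 2 * ((x - a) * (b - x)) := by
  have hM0 : 0 ≤ M := le_trans (abs_nonneg _) (hM a ⟨le_rfl, hab.le⟩)
  have hba : b - a ≠ 0 := sub_ne_zero.2 hab.ne'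
  set s : ℝ := (g b - g a) / (b - a) with hs
  have hgd : Differentiable ℝ g := hg.differentiable (by norm_num)
  have hgd2 : ContDiff ℝ 1 (deriv g) := by
    have h2 : ContDiff ℝ (1 + 1 : ℕ) g := by exact_mod_cast hg
    exact (contDiff_succ_iff_deriv.mp (by exact_mod_cast h2)).2.2
  have hgd2' : Differentiable ℝ (deriv g) := hgd2.differentiable (by norm_num)
  rcases eq_or_lt_of_le hx.1 with hax | hax
  · subst hax
    simp [hM0, mul_nonneg, sub_nonneg.2 hx.2]
  rcases eq_or_lt_of_le hx.2 with hxb | hxb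
  · rw [hxb]
    have h0 : g b - (g a + s * (b - a)) = 0 := by rw [hs]; field_simp; ring
    rw [h0]
    have : (0:ℝ) ≤ M / 2 * ((b - a) * (b - b)) := by simp
    simpa using this
  have hxa : x - a ≠ 0 := ne_of_gt (by linarith)
  have hbx : b - x ≠ 0 := ne_of_gt (by linarith)
  set c : ℝ := (g x - (g a + s * (x - a))) / ((x - a) * (b - x)) with hc
  have hkey : g x - (g a + s * (x - a)) = c * ((x - a) * (b - x)) := by
    rw [hc, div_mul_cancel₀ _ (mul_ne_zero hxa hbx)]
  suffices hcb : |c| ≤ M / 2 by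
    rw [hkey, abs_mul]
    have h1 : |(x - a) * (b - x)| = (x - a) * (b - x) :=
      abs_of_nonneg (mul_nonneg (by linarith) (by linarith))
    rw [h1]
    exact mul_le_mul_of_nonneg_right hcb (mul_nonneg (by linarith) (by linarith))
  set φ : ℝ → ℝ := fun t => g t - ((g a + s * (t - a)) + c * ((t - a) * (b - t))) with hφ
  have hφa : φ a = 0 := by simp [hφ]
  have hφx : φ x = 0 := by
    simp only [hφ]
    rw [show g a + s * (x - a) + c * ((x - a) * (b - x))
      = (g a + s * (x-a)) + (g x - (g a + s * (x - a))) by rw [hkey]]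
    ring
  have hφb : φ b = 0 := by
    simp only [hφ, hs]
    field_simp
    ring
  have hψ : ∀ t : ℝ, HasDerivAt (fun t => (g a + s * (t - a)) + c * ((t - a) * (b - t)))
      (s + c * ((b - t) - (t - a))) t := by
    intro t
    have h1 : HasDerivAt (fun t : ℝ => t - a) 1 t := (hasDerivAt_id t).sub_const a
    have h2 : HasDerivAt (fun t : ℝ => b - t) (-1) t := by
      exact (hasDerivAt_id' t).const_sub b
    have h3 : HasDerivAt (fun t : ℝ => (t - a) * (b - t)) (1 * (b - t) + (t - a) * (-1)) t :=
      h1.mul h2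
    have := ((h1.const_mul s).const_add (g a)).add (h3.const_mul c)
    refine this.congr_deriv ?_
    ring
  have hφd : ∀ t : ℝ, HasDerivAt φ (deriv g t - (s + c * ((b - t) - (t - a)))) t := by
    intro t
    exact ((hgd t).hasDerivAt).sub (hψ t)
  have hderivφ : deriv φ = fun t => deriv g t - (s + c * ((b - t) - (t - a))) :=
    funext fun t => (hφd t).deriv
  have hφcont : Continuous φ := by
    apply hgd.continuous.sub
    apply Continuous.add
    · exact continuous_const.add (continuous_const.mul (continuous_id.sub continuous_const))
    · exact continuous_const.mul ((continuous_id.sub continuous_const).mul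
        (continuous_const.sub continuous_id))
  have hφ'cont : Continuous (deriv φ) := by
    rw [hderivφ]
    exact (hg.continuous_deriv (by norm_num)).sub (continuous_const.add
      (continuous_const.mul ((continuous_const.sub continuous_id).sub
        (continuous_id.sub continuous_const))))
  obtain ⟨ξ₁, hξ₁, hd1⟩ := exists_deriv_eq_zero hax hφcont.continuousOn (hφa.trans hφx.symm)
  obtain ⟨ξ₂, hξ₂, hd2⟩ := exists_deriv_eq_zero hxb hφcont.continuousOn (hφx.trans hφb.symm)
  have hξ12 : ξ₁ < ξ₂ := lt_trans hξ₁.2 hξ₂.1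
  obtain ⟨ξ, hξ, hd⟩ := exists_deriv_eq_zero hξ12 hφ'cont.continuousOn (hd1.trans hd2.symm)
  have hφ'' : HasDerivAt (deriv φ) (deriv (deriv g) ξ + 2 * c) ξ := by
    rw [hderivφ]
    have h2 : HasDerivAt (fun t : ℝ => (b - t) - (t - a)) (-2) ξ := by
      have := (((hasDerivAt_const ξ b).sub (hasDerivAt_id ξ)).sub
        ((hasDerivAt_id ξ).sub_const a))
      refine this.congr_deriv ?_
      norm_num
    have h1 : HasDerivAt (fun t : ℝ => s + c * ((b - t) - (t - a))) (c * (-2)) ξ :=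
      (h2.const_mul c).const_add s
    have := ((hgd2' ξ).hasDerivAt).sub h1
    refine this.congr_deriv ?_
    ring
  have h0 : deriv (deriv g) ξ + 2 * c = 0 := by
    rw [← hφ''.deriv]
    exact hd
  have hξmem : ξ ∈ Set.Icc a b := ⟨by linarith [hξ.1, hξ₁.1], by linarith [hξ.2, hξ₂.2]⟩
  have hMξ := hM ξ hξmem
  rw [show c = -(deriv (deriv g) ξ) / 2 by linarith]
  rw [abs_div, abs_neg]
  simp only [abs_two]
  linarith [abs_nonneg (deriv (deriv g) ξ)]

set_option maxHeartbeats 1000000 in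
/-- Single-interval form of Lemma 3.5: for a C² positive `g` and a quadratic
polynomial `η` of constant sign on `[a,b]`, the Simpson quadrature error of
`g|η|` is bounded by `(1/3) sup|g''| (b−a)^{5/2} ‖η‖_{L²(a,b)}`. -/
theorem stmt_11 (a b : ℝ) (hab : a < b) (g : ℝ → ℝ) (hg : ContDiff ℝ 2 g)
    (hg_pos : ∀ x ∈ Set.Icc a b, 0 < g x)
    (η : Polynomial ℝ) (hη : η.degree ≤ 2)
    (hsign : (∀ x ∈ Set.Icc a b, 0 ≤ η.eval x) ∨ (∀ x ∈ Set.Icc a b, η.eval x ≤ 0)) :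
    |(((b - a) / 6) *
          (g a * |η.eval a| + 4 * g ((a + b) / 2) * |η.eval ((a + b) / 2)|
            + g b * |η.eval b|) -
        ∫ x in a..b, g x * |η.eval x|)| ≤
      (1 / 3) * (⨆ t : Set.Icc a b, |deriv (deriv g) (t : ℝ)|) *
        (b - a) ^ ((5 : ℝ) / 2) * Real.sqrt (∫ x in a..b, (η.eval x) ^ 2) := by
  have hba : b - a ≠ 0 := sub_ne_zero.2 hab.ne'
  have hba0 : (0:ℝ) < b - a := by linarith
  set M : ℝ := ⨆ t : Set.Icc a b, |deriv (deriv g) (t : ℝ)| with hMdef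
  -- continuity of second derivative
  have hg'' : Continuous (deriv (deriv g)) := by
    have h2 : ContDiff ℝ (1 + 1 : ℕ) g := by exact_mod_cast hg
    exact ((contDiff_succ_iff_deriv.mp (by exact_mod_cast h2)).2.2).continuous_deriv le_rfl
  have hMbd : ∀ t ∈ Set.Icc a b, |deriv (deriv g) t| ≤ M := by
    intro t ht
    have hcont : Continuous fun t : Set.Icc a b => |deriv (deriv g) (t : ℝ)| :=
      (hg''.comp continuous_subtype_val).abs
    have hbdd : BddAbove (Set.range fun t : Set.Icc a b => |deriv (deriv g) (t : ℝ)|) :=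
      (isCompact_range hcont).bddAbove
    exact le_ciSup hbdd (⟨t, ht⟩ : Set.Icc a b)
  have hM0 : 0 ≤ M := le_trans (abs_nonneg _) (hMbd a ⟨le_rfl, hab.le⟩)
  -- constant-sign polynomial ζ with |η| = ζ on [a,b]
  obtain ⟨ζ, hζdeg, hζpos, hζabs, hζsq⟩ :
      ∃ ζ : Polynomial ℝ, ζ.degree ≤ 2 ∧ (∀ x ∈ Set.Icc a b, 0 ≤ ζ.eval x) ∧
        (∀ x ∈ Set.Icc a b, |η.eval x| = ζ.eval x) ∧
        (∀ x : ℝ, (η.eval x) ^ 2 = (ζ.eval x) ^ 2) := by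
    rcases hsign with hpos | hneg
    · exact ⟨η, hη, hpos, fun x hx => abs_of_nonneg (hpos x hx), fun x => rfl⟩
    · refine ⟨-η, ?_, ?_, ?_, ?_⟩
      · simpa [Polynomial.degree_neg] using hη
      · intro x hx; simp only [Polynomial.eval_neg]; linarith [hneg x hx]
      · intro x hx; simp only [Polynomial.eval_neg]; exact abs_of_nonpos (hneg x hx)
      · intro x; simp only [Polynomial.eval_neg]; ring
  have hm : (a + b) / 2 ∈ Set.Icc a b := ⟨by linarith, by linarith⟩
  set m : ℝ := (a + b) / 2 with hmdef
  have hζcont : Continuous fun x => ζ.eval x := ζ.continuous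
  have hgc : Continuous g := hg.continuous
  -- rewrite the goal in terms of ζ
  rw [hζabs a ⟨le_rfl, hab.le⟩, hζabs b ⟨hab.le, le_rfl⟩, hζabs m hm]
  rw [show (∫ x in a..b, g x * |η.eval x|) = ∫ x in a..b, g x * ζ.eval x from
    intervalIntegral.integral_congr (fun x hx => by
      rw [Set.uIcc_of_le hab.le] at hx; rw [hζabs x hx])]
  rw [show (∫ x in a..b, (η.eval x) ^ 2) = ∫ x in a..b, (ζ.eval x) ^ 2 from
    intervalIntegral.integral_congr (fun x _ => hζsq x)]
  -- the affine interpolant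
  set s : ℝ := (g b - g a) / (b - a) with hs
  set L : ℝ → ℝ := fun x => g a + s * (x - a) with hL
  have hLa : L a = g a := by simp [hL]
  have hLb : L b = g b := by rw [hL]; simp only [hs]; field_simp; ring
  have hLcont : Continuous L := by
    exact continuous_const.add (continuous_const.mul (continuous_id.sub continuous_const))
  -- Simpson is exact for L·ζ
  set PL : Polynomial ℝ := Polynomial.C s * Polynomial.X + Polynomial.C (g a - s * a) with hPL
  have hPLeval : ∀ x : ℝ, PL.eval x = L x := by
    intro x; simp [hPL, hL]; ring
  have hPLdeg : PL.degree ≤ 1 := Polynomial.degree_linear_le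
  have hPLζ : (PL * ζ).degree ≤ 3 := by
    rw [Polynomial.degree_mul]
    calc PL.degree + ζ.degree ≤ 1 + 2 := add_le_add hPLdeg hζdeg
      _ = 3 := by norm_num
      _ ≤ 3 := le_rfl
  have hintL : (∫ x in a..b, L x * ζ.eval x)
      = ((b - a)/6) * (g a * ζ.eval a + 4 * L m * ζ.eval m + g b * ζ.eval b) := by
    have := simpson_exact a b (PL * ζ) hPLζ
    simp only [Polynomial.eval_mul, hPLeval] at this
    rw [show (∫ x in a..b, L x * ζ.eval x) = ∫ x in a..b, (L x) * ζ.eval x from rfl, this,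
      hLa, hLb]
    ring
  -- Simpson is exact for ζ
  have hintζ : (∫ x in a..b, ζ.eval x)
      = ((b - a)/6) * (ζ.eval a + 4 * ζ.eval m + ζ.eval b) :=
    simpson_exact a b ζ (le_trans hζdeg (by norm_num))
  -- decomposition of the error
  have hgint : IntervalIntegrable (fun x => g x * ζ.eval x) MeasureTheory.volume a b :=
    (hgc.mul hζcont).intervalIntegrable a b
  have hLint : IntervalIntegrable (fun x => L x * ζ.eval x) MeasureTheory.volume a b :=
    (hLcont.mul hζcont).intervalIntegrable a b
  have hsplit : ((b - a)/6) * (g a * ζ.eval a + 4 * g m * ζ.eval m + g b * ζ.eval b)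
        - (∫ x in a..b, g x * ζ.eval x)
      = ((b - a)/6) * (4 * (g m - L m) * ζ.eval m)
        - ∫ x in a..b, (g x - L x) * ζ.eval x := by
    have h1 : (∫ x in a..b, (g x - L x) * ζ.eval x)
        = (∫ x in a..b, g x * ζ.eval x) - ∫ x in a..b, L x * ζ.eval x := by
      rw [← intervalIntegral.integral_sub hgint hLint]
      congr 1
      funext x
      ring
    rw [h1, hintL]
    ring
  rw [hsplit]
  -- bound the two pieces
  set Q : ℝ := Real.sqrt (∫ x in a..b, (ζ.eval x) ^ 2) with hQ
  have hQ0 : 0 ≤ Q := Real.sqrt_nonneg _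
  have hR0 : (0:ℝ) ≤ Real.sqrt (b - a) := Real.sqrt_nonneg _
  -- L² bound for ∫ ζ
  have hζL1 : (∫ x in a..b, ζ.eval x) ≤ Real.sqrt (b - a) * Q := by
    have := interval_cauchy_schwarz a b hab.le (fun _ => 1) (fun x => ζ.eval x)
      continuous_const hζcont
    simpa [one_pow, hQ, hba0.le] using this
  -- bound on e(m)
  have hem : |g m - L m| ≤ M * (b - a)^2 / 8 := by
    have h1 := interp_err a b hab g hg M hMbd m hm
    have h2 : (m - a) * (b - m) = (b - a)^2 / 4 := by rw [hmdef]; ring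
    rw [hL]
    calc |g m - (g a + s * (m - a))| ≤ M / 2 * ((m - a) * (b - m)) := h1
      _ = M * (b - a)^2 / 8 := by rw [h2]; ring
  -- Term 1
  have hζm0 : 0 ≤ ζ.eval m := hζpos m hm
  have hterm1 : |((b - a)/6) * (4 * (g m - L m) * ζ.eval m)|
      ≤ M * (b - a)^2 / 8 * (Real.sqrt (b - a) * Q) := by
    have e1 : |((b - a)/6) * (4 * (g m - L m) * ζ.eval m)|
        = ((b - a)/6 * (4 * ζ.eval m)) * |g m - L m| := by
      rw [show ((b - a)/6) * (4 * (g m - L m) * ζ.eval m)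
        = (((b - a)/6) * (4 * ζ.eval m)) * (g m - L m) by ring, abs_mul,
        abs_of_nonneg (by positivity)]
    rw [e1]
    have e2 : ((b - a)/6 * (4 * ζ.eval m)) * |g m - L m|
        ≤ ((b - a)/6 * (4 * ζ.eval m)) * (M * (b - a)^2 / 8) :=
      mul_le_mul_of_nonneg_left hem (by positivity)
    have e3 : (b - a)/6 * (4 * ζ.eval m) ≤ ∫ x in a..b, ζ.eval x := by
      rw [hintζ]
      have hζa0 : 0 ≤ ζ.eval a := hζpos a ⟨le_rfl, hab.le⟩
      have hζb0 : 0 ≤ ζ.eval b := hζpos b ⟨hab.le, le_rfl⟩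
      nlinarith
    calc ((b - a)/6 * (4 * ζ.eval m)) * |g m - L m|
        ≤ ((b - a)/6 * (4 * ζ.eval m)) * (M * (b - a)^2 / 8) := e2
      _ = (M * (b - a)^2 / 8) * ((b - a)/6 * (4 * ζ.eval m)) := by ring
      _ ≤ (M * (b - a)^2 / 8) * (∫ x in a..b, ζ.eval x) :=
          mul_le_mul_of_nonneg_left e3 (by positivity)
      _ ≤ M * (b - a)^2 / 8 * (Real.sqrt (b - a) * Q) :=
          mul_le_mul_of_nonneg_left hζL1 (by positivity)
  -- Term 2
  have hwcont : Continuous fun x : ℝ => (x - a) * (b - x) :=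
    (continuous_id.sub continuous_const).mul (continuous_const.sub continuous_id)
  have hterm2 : |∫ x in a..b, (g x - L x) * ζ.eval x|
      ≤ M / 2 * (Real.sqrt ((b - a)^5 / 30) * Q) := by
    have h1 : |∫ x in a..b, (g x - L x) * ζ.eval x|
        ≤ ∫ x in a..b, |(g x - L x) * ζ.eval x| :=
      intervalIntegral.abs_integral_le_integral_abs hab.le
    have h2 : (∫ x in a..b, |(g x - L x) * ζ.eval x|)
        ≤ ∫ x in a..b, (M / 2 * ((x - a) * (b - x))) * ζ.eval x := by
      apply intervalIntegral.integral_mono_on hab.le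
      · exact (((hgc.sub hLcont).mul hζcont).abs).intervalIntegrable a b
      · exact ((continuous_const.mul hwcont).mul hζcont).intervalIntegrable a b
      · intro x hx
        rw [abs_mul, abs_of_nonneg (hζpos x hx)]
        exact mul_le_mul_of_nonneg_right (interp_err a b hab g hg M hMbd x hx) (hζpos x hx)
    have h3 : (∫ x in a..b, (M / 2 * ((x - a) * (b - x))) * ζ.eval x)
        = M / 2 * ∫ x in a..b, ((x - a) * (b - x)) * ζ.eval x := by
      rw [← intervalIntegral.integral_const_mul]
      congr 1
      funext x
      ring
    have h4 : (∫ x in a..b, ((x - a) * (b - x)) * ζ.eval x)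
        ≤ Real.sqrt ((b - a)^5 / 30) * Q := by
      have hCS := interval_cauchy_schwarz a b hab.le (fun x => (x - a) * (b - x))
        (fun x => ζ.eval x) hwcont hζcont
      have hw2 : (∫ x in a..b, ((x - a) * (b - x)) ^ 2) = (b - a)^5 / 30 := by
        have hexp : ∀ x : ℝ, ((x - a) * (b - x)) ^ 2
            = a^2*b^2 + (-(2*a*b*(a+b)))*x + (a^2 + 4*a*b + b^2)*x^2
              + (-(2*(a+b)))*x^3 + 1*x^4 := by intro x; ring
        simp only [hexp]
        rw [integral_quartic]
        ring
      rw [hw2] at hCS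
      exact hCS
    calc |∫ x in a..b, (g x - L x) * ζ.eval x|
        ≤ ∫ x in a..b, |(g x - L x) * ζ.eval x| := h1
      _ ≤ ∫ x in a..b, (M / 2 * ((x - a) * (b - x))) * ζ.eval x := h2
      _ = M / 2 * ∫ x in a..b, ((x - a) * (b - x)) * ζ.eval x := h3
      _ ≤ M / 2 * (Real.sqrt ((b - a)^5 / 30) * Q) :=
          mul_le_mul_of_nonneg_left h4 (by positivity)
  -- final numeric assembly
  have hsq30 : Real.sqrt ((b - a)^5 / 30) ≤ (b - a)^2 * Real.sqrt (b - a) / 5 := by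
    have h1 : (b - a)^5 / 30 ≤ ((b - a)^2 * Real.sqrt (b - a) / 5)^2 := by
      have : ((b - a)^2 * Real.sqrt (b - a) / 5)^2 = (b - a)^4 * (b - a) / 25 := by
        rw [div_pow, mul_pow, Real.sq_sqrt hba0.le]
        ring
      rw [this]
      nlinarith [pow_pos hba0 5]
    calc Real.sqrt ((b - a)^5 / 30) ≤ Real.sqrt (((b - a)^2 * Real.sqrt (b - a) / 5)^2) :=
        Real.sqrt_le_sqrt h1
      _ = (b - a)^2 * Real.sqrt (b - a) / 5 := Real.sqrt_sq (by positivity)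
  have hrpow : (b - a) ^ ((5:ℝ)/2) = (b - a)^2 * Real.sqrt (b - a) := by
    rw [show ((5:ℝ)/2) = ((2:ℕ) : ℝ) + (1/2 : ℝ) by norm_num,
      Real.rpow_add hba0, Real.rpow_natCast, ← Real.sqrt_eq_rpow]
  rw [hrpow]
  have h2' : M / 2 * (Real.sqrt ((b - a)^5 / 30) * Q)
      ≤ M / 2 * ((b - a)^2 * Real.sqrt (b - a) / 5 * Q) :=
    mul_le_mul_of_nonneg_left (mul_le_mul_of_nonneg_right hsq30 hQ0) (by positivity)
  have hfin : M * (b - a)^2 / 8 * (Real.sqrt (b - a) * Q)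
      + M / 2 * ((b - a)^2 * Real.sqrt (b - a) / 5 * Q)
      ≤ 1 / 3 * M * ((b - a)^2 * Real.sqrt (b - a)) * Q := by
    have ht : 0 ≤ M * ((b - a)^2 * Real.sqrt (b - a) * Q) := by positivity
    have key : M * ((b - a)^2 * Real.sqrt (b - a) * Q) * (9/40)
        ≤ M * ((b - a)^2 * Real.sqrt (b - a) * Q) * (1/3) :=
      mul_le_mul_of_nonneg_left (by norm_num) ht
    calc M * (b - a)^2 / 8 * (Real.sqrt (b - a) * Q)
          + M / 2 * ((b - a)^2 * Real.sqrt (b - a) / 5 * Q)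
        = M * ((b - a)^2 * Real.sqrt (b - a) * Q) * (9/40) := by ring
      _ ≤ M * ((b - a)^2 * Real.sqrt (b - a) * Q) * (1/3) := key
      _ = 1 / 3 * M * ((b - a)^2 * Real.sqrt (b - a)) * Q := by ring
  calc |((b - a)/6) * (4 * (g m - L m) * ζ.eval m)
        - ∫ x in a..b, (g x - L x) * ζ.eval x|
      ≤ |((b - a)/6) * (4 * (g m - L m) * ζ.eval m)|
        + |∫ x in a..b, (g x - L x) * ζ.eval x| := abs_sub _ _
    _ ≤ M * (b - a)^2 / 8 * (Real.sqrt (b - a) * Q)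
        + M / 2 * (Real.sqrt ((b - a)^5 / 30) * Q) := add_le_add hterm1 hterm2
    _ ≤ M * (b - a)^2 / 8 * (Real.sqrt (b - a) * Q)
        + M / 2 * ((b - a)^2 * Real.sqrt (b - a) / 5 * Q) := by linarith [h2']
    _ ≤ 1 / 3 * M * ((b - a)^2 * Real.sqrt (b - a)) * Q := hfin
end

section
/- Let V be a real normed vector space, a : V × V → ℝ a bilinear map satisfying a(v, v) ≥ α‖v‖² for all v ∈ V with α > 0, let j, j_h : V → ℝ be functionals, f : V → ℝ a linear map, and V_h ⊆ V a subset. Suppose u ∈ V satisfies a(u, v − u) + j(v) − j(u) ≥ f(v − u) for all v ∈ V, and u_h ∈ V_h satisfies a(u_h, w − u_h) + j_h(w) − j_h(u_h) ≥ f(w − u_h) for all w ∈ V_h. Then for every v_h ∈ V_h: α‖u − u_h‖² ≤ a(u − u_h, u − v_h) + [ a(u, v_h − u) − f(v_h − u) ] + j(u_h) − j(u) + j_h(v_h) − j_h(u_h). -/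
/-- Abstract Falk-type error inequality from Propositions 3.1(ii)/4.1(ii):
for the continuous solution `u` and discrete solution `uh ∈ Vh` of the two
variational inequalities, and any `vh ∈ Vh`,
`α‖u − uh‖² ≤ a(u−uh, u−vh) + [a(u, vh−u) − f(vh−u)] + j(uh) − j(u) + jh(vh) − jh(uh)`. -/
theorem stmt_15 {V : Type*} [NormedAddCommGroup V] [NormedSpace ℝ V]
    (a : V →ₗ[ℝ] V →ₗ[ℝ] ℝ) (α : ℝ) (hα : 0 < α)
    (hcoer : ∀ v : V, a v v ≥ α * ‖v‖ ^ 2)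
    (j jh : V → ℝ) (f : V →ₗ[ℝ] ℝ) (Vh : Set V)
    (u : V) (hu : ∀ v : V, a u (v - u) + j v - j u ≥ f (v - u))
    (uh : V) (huh : uh ∈ Vh)
    (hdis : ∀ w ∈ Vh, a uh (w - uh) + jh w - jh uh ≥ f (w - uh)) :
    ∀ vh ∈ Vh,
      α * ‖u - uh‖ ^ 2 ≤
        a (u - uh) (u - vh) + (a u (vh - u) - f (vh - u))
          + j uh - j u + jh vh - jh uh := by
  intro vh hvh
  have h1 := hu uh
  have h2 := hdis vh hvh
  have h3 := hcoer (u - uh)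
  simp only [map_sub, LinearMap.sub_apply] at *
  linarith
end

section
/- Let V and Λ be real inner product spaces, a : V × V → ℝ a bilinear map with a(v, v) ≥ α‖v‖² for all v ∈ V (α > 0), T : V → Λ a linear map with ‖Tv‖ ≤ γ‖v‖ for all v ∈ V, K ⊆ Λ a convex set, f : V → ℝ linear, and ρ ≥ 0. Suppose: (1) u ∈ V, λ ∈ K satisfy a(u, v) + ⟨Tv, λ⟩ = f(v) for all v ∈ V and ⟨Tu, μ − λ⟩ ≤ 0 for all μ ∈ K; (2) λ' ∈ K, u' ∈ V satisfy a(u', v) + ⟨Tv, λ'⟩ = f(v) for all v ∈ V; (3) λ'' ∈ K satisfies the projection characterization ⟨(λ' + ρ T u') − λ'', μ − λ''⟩ ≤ 0 for all μ ∈ K. Then ‖λ'' − λ‖² ≤ ‖λ' − λ‖² − (2αρ − γ²ρ²)‖u' − u‖². -/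
open scoped RealInnerProductSpace

/-- One-step contraction inequality ((3.37)/(4.29)) of the Uzawa iteration:
`‖λ'' − λ‖² ≤ ‖λ' − λ‖² − (2αρ − γ²ρ²)‖u' − u‖²`. -/
theorem stmt_17 {V E : Type*} [NormedAddCommGroup V] [InnerProductSpace ℝ V]
    [NormedAddCommGroup E] [InnerProductSpace ℝ E]
    (a : V →ₗ[ℝ] V →ₗ[ℝ] ℝ) (α : ℝ) (hα : 0 < α)
    (hcoer : ∀ v : V, a v v ≥ α * ‖v‖ ^ 2)
    (T : V →ₗ[ℝ] E) (γ : ℝ) (hT : ∀ v : V, ‖T v‖ ≤ γ * ‖v‖)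
    (K : Set E) (hK : Convex ℝ K)
    (f : V →ₗ[ℝ] ℝ) (ρ : ℝ) (hρ : 0 ≤ ρ)
    (u : V) (lam : E) (hlamK : lam ∈ K)
    (h1 : ∀ v : V, a u v + ⟪T v, lam⟫ = f v)
    (h1' : ∀ μ ∈ K, ⟪T u, μ - lam⟫ ≤ 0)
    (lam' : E) (hlam'K : lam' ∈ K) (u' : V)
    (h2 : ∀ v : V, a u' v + ⟪T v, lam'⟫ = f v)
    (lam'' : E) (hlam''K : lam'' ∈ K)
    (h3 : ∀ μ ∈ K, ⟪(lam' + ρ • T u') - lam'', μ - lam''⟫ ≤ 0) :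
    ‖lam'' - lam‖ ^ 2 ≤
      ‖lam' - lam‖ ^ 2 - (2 * α * ρ - γ ^ 2 * ρ ^ 2) * ‖u' - u‖ ^ 2 := by
  set d := lam'' - lam with hd
  set e := lam' - lam with he
  set w := T (u' - u) with hw
  -- the bilinear identity
  have hbil : ⟪w, e⟫ = -(a (u' - u) (u' - u)) := by
    have h1v := h1 (u' - u)
    have h2v := h2 (u' - u)
    have hsub : a (u' - u) (u' - u) = a u' (u' - u) - a u (u' - u) := by
      simp only [map_sub, LinearMap.sub_apply]; ring
    have hin : ⟪T (u' - u), lam' - lam⟫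
        = ⟪T (u' - u), lam'⟫ - ⟪T (u' - u), lam⟫ := inner_sub_right _ _ _
    rw [hw, he, hin, hsub]
    linarith
  have hcoUU : a (u' - u) (u' - u) ≥ α * ‖u' - u‖ ^ 2 := hcoer _
  have hwe : ⟪e, w⟫ ≤ -(α * ‖u' - u‖ ^ 2) := by
    rw [real_inner_comm, hbil]; linarith
  have hwnorm : ‖w‖ ^ 2 ≤ γ ^ 2 * ‖u' - u‖ ^ 2 := by
    have := hT (u' - u)
    nlinarith [norm_nonneg w, norm_nonneg (u' - u)]
  -- key inequality from projection characterizations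
  have hA := h3 lam hlamK
  have hB := h1' lam'' hlam''K
  have hkey : ‖d‖ ^ 2 ≤ ⟪e + ρ • w, d⟫ := by
    have hrw : (lam' + ρ • T u') - lam'' = e + ρ • T u' - d := by
      rw [he, hd]; abel
    have hrw2 : lam - lam'' = -d := by rw [hd]; abel
    rw [hrw, hrw2, inner_neg_right] at hA
    have hA' : 0 ≤ ⟪e + ρ • T u' - d, d⟫ := by linarith
    have hB' : ρ * ⟪T u, d⟫ ≤ 0 :=
      mul_nonpos_of_nonneg_of_nonpos hρ (by simpa [hd] using hB)
    have hexp : ⟪e + ρ • w, d⟫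
        = ⟪e + ρ • T u' - d, d⟫ + ⟪d, d⟫ - ρ * ⟪T u, d⟫ := by
      have : (e + ρ • w : E) = (e + ρ • T u' - d) + d - ρ • T u := by
        rw [hw, map_sub]; module
      rw [this, inner_sub_left, inner_add_left, real_inner_smul_left]
    rw [hexp]
    have : ⟪d, d⟫ = ‖d‖ ^ 2 := real_inner_self_eq_norm_sq d
    linarith
  have hcs : ⟪e + ρ • w, d⟫ ≤ ‖e + ρ • w‖ * ‖d‖ := real_inner_le_norm _ _
  have hdle : ‖d‖ ≤ ‖e + ρ • w‖ := by
    rcases eq_or_lt_of_le (norm_nonneg d) with h0 | h0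
    · rw [← h0]; exact norm_nonneg _
    · nlinarith
  have hsq : ‖d‖ ^ 2 ≤ ‖e + ρ • w‖ ^ 2 := by
    nlinarith [norm_nonneg d]
  have hexp2 : ‖e + ρ • w‖ ^ 2 = ‖e‖ ^ 2 + 2 * (ρ * ⟪e, w⟫) + ρ ^ 2 * ‖w‖ ^ 2 := by
    rw [norm_add_sq_real, real_inner_smul_right, norm_smul, Real.norm_eq_abs,
      mul_pow, sq_abs]
  rw [hexp2] at hsq
  have hρ2 : 0 ≤ ρ ^ 2 := sq_nonneg ρ
  nlinarith [mul_le_mul_of_nonneg_left hwe hρ, mul_le_mul_of_nonneg_left hwnorm hρ2]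
end

section
/- Let V and Λ be finite-dimensional real inner product spaces, a : V × V → ℝ a bilinear map with a(v, v) ≥ α‖v‖² and |a(v, w)| ≤ M‖v‖‖w‖ for all v, w ∈ V (α > 0, M > 0), T : V → Λ a surjective linear map with ‖Tv‖ ≤ γ‖v‖ for all v ∈ V (γ > 0), K ⊆ Λ a nonempty closed convex set, and f : V → ℝ linear. Suppose u ∈ V and λ ∈ K satisfy a(u, v) + ⟨Tv, λ⟩ = f(v) for all v ∈ V and ⟨Tu, μ − λ⟩ ≤ 0 for all μ ∈ K. Let ρ satisfy 0 < ρ and ργ² < 2α, and let sequences (u^{(k)})_{k≥1} in V and (λ^{(k)})_{k≥1} in K satisfy: a(u^{(k)}, v) + ⟨Tv, λ^{(k)}⟩ = f(v) for all v ∈ V and all k, and for every k the update λ^{(k+1)} ∈ K satisfies ⟨(λ^{(k)} + ρ T u^{(k)}) − λ^{(k+1)}, μ − λ^{(k+1)}⟩ ≤ 0 for all μ ∈ K. Then u^{(k)} → u and λ^{(k)} → λ as k → ∞. -/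
open scoped RealInnerProductSpace

lemma proj_contract' {E : Type*} [NormedAddCommGroup E] [InnerProductSpace ℝ E]
    (p p' q q' : E) (h1 : ⟪p - q, q' - q⟫ ≤ 0) (h2 : ⟪p' - q', q - q'⟫ ≤ 0) :
    ‖q - q'‖ ≤ ‖p - p'‖ := by
  have key : ‖q - q'‖ ^ 2 ≤ ⟪p - p', q - q'⟫ := by
    have e1 : ⟪p - q, q' - q⟫ + ⟪p' - q', q - q'⟫
        = ⟪p' - p, q - q'⟫ + ⟪q - q', q - q'⟫ := by
      simp only [inner_sub_left, inner_sub_right]; ring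
    have e2 : ⟪q - q', q - q'⟫ = ‖q - q'‖ ^ 2 := real_inner_self_eq_norm_sq _
    have e3 : ⟪p' - p, q - q'⟫ = -⟪p - p', q - q'⟫ := by
      rw [← inner_neg_left]; congr 1; abel
    nlinarith [h1, h2]
  have cs : ⟪p - p', q - q'⟫ ≤ ‖p - p'‖ * ‖q - q'‖ := real_inner_le_norm _ _
  by_cases hz : ‖q - q'‖ = 0
  · rw [hz]; exact norm_nonneg _
  · have hpos : 0 < ‖q - q'‖ := lt_of_le_of_ne (norm_nonneg _) (Ne.symm hz)
    nlinarith

/-- Abstract form of Theorem 3.4: convergence of the Uzawa-type algorithm.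
Under the saddle-point relations for `(u, λ)`, the iterates `(u⁽ᵏ⁾, λ⁽ᵏ⁾)`
obtained from Step 1 (the linear problem) and Step 2 (the projected update,
characterized variationally) converge to `(u, λ)` whenever `0 < ρ` and
`ργ² < 2α`. -/
theorem stmt_18 {V E : Type*} [NormedAddCommGroup V] [InnerProductSpace ℝ V]
    [NormedAddCommGroup E] [InnerProductSpace ℝ E]
    [FiniteDimensional ℝ V] [FiniteDimensional ℝ E]
    (a : V →ₗ[ℝ] V →ₗ[ℝ] ℝ) (α M : ℝ) (hα : 0 < α) (hM : 0 < M)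
    (hcoer : ∀ v : V, a v v ≥ α * ‖v‖ ^ 2)
    (hbound : ∀ v w : V, |a v w| ≤ M * ‖v‖ * ‖w‖)
    (T : V →ₗ[ℝ] E) (hTsurj : Function.Surjective T)
    (γ : ℝ) (hγ : 0 < γ) (hT : ∀ v : V, ‖T v‖ ≤ γ * ‖v‖)
    (K : Set E) (hKne : K.Nonempty) (hKcl : IsClosed K) (hK : Convex ℝ K)
    (f : V →ₗ[ℝ] ℝ)
    (u : V) (lam : E) (hlamK : lam ∈ K)
    (h1 : ∀ v : V, a u v + ⟪T v, lam⟫ = f v)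
    (h1' : ∀ μ ∈ K, ⟪T u, μ - lam⟫ ≤ 0)
    (ρ : ℝ) (hρ : 0 < ρ) (hρ0 : ρ * γ ^ 2 < 2 * α)
    (useq : ℕ → V) (lamseq : ℕ → E) (hlamseqK : ∀ k, lamseq k ∈ K)
    (hstep1 : ∀ k, ∀ v : V, a (useq k) v + ⟪T v, lamseq k⟫ = f v)
    (hstep2 : ∀ k, ∀ μ ∈ K,
      ⟪(lamseq k + ρ • T (useq k)) - lamseq (k + 1), μ - lamseq (k + 1)⟫ ≤ 0) :
    Filter.Tendsto useq Filter.atTop (nhds u) ∧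
      Filter.Tendsto lamseq Filter.atTop (nhds lam) := by
  set w : ℕ → V := fun k => useq k - u with hw
  set e : ℕ → E := fun k => lamseq k - lam with he
  -- error equation
  have key1 : ∀ k (v : V), a (w k) v = -⟪T v, e k⟫ := by
    intro k v
    have hk := hstep1 k v
    have h0 := h1 v
    have : a (w k) v = a (useq k) v - a u v := by
      simp [hw, map_sub, LinearMap.sub_apply]
    rw [this]
    have : ⟪T v, e k⟫ = ⟪T v, lamseq k⟫ - ⟪T v, lam⟫ := by
      simp [he, inner_sub_right]
    rw [this]; linarith
  -- coercivity consequence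
  have coer : ∀ k, α * ‖w k‖ ^ 2 ≤ -⟪T (w k), e k⟫ := by
    intro k
    have := hcoer (w k)
    rw [key1 k (w k)] at this
    linarith
  -- one-step contraction
  have contr : ∀ k, ‖e (k + 1)‖ ≤ ‖e k + ρ • T (w k)‖ := by
    intro k
    have hA := hstep2 k lam hlamK
    have hB := h1' (lamseq (k + 1)) (hlamseqK (k + 1))
    have hB' : ⟪(lam + ρ • T u) - lam, lamseq (k + 1) - lam⟫ ≤ 0 := by
      have : (lam + ρ • T u) - lam = ρ • T u := by abel
      rw [this, real_inner_smul_left]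
      nlinarith
    have := proj_contract' (lamseq k + ρ • T (useq k)) (lam + ρ • T u)
      (lamseq (k + 1)) lam hA hB'
    have heq : (lamseq k + ρ • T (useq k)) - (lam + ρ • T u)
        = e k + ρ • T (w k) := by
      simp only [he, hw, map_sub, smul_sub]; abel
    rwa [heq] at this
  -- quantitative decrease
  set c : ℝ := ρ * (2 * α - ρ * γ ^ 2) with hc
  have hcpos : 0 < c := by
    apply mul_pos hρ; linarith
  have decr : ∀ k, ‖e (k + 1)‖ ^ 2 + c * ‖w k‖ ^ 2 ≤ ‖e k‖ ^ 2 := by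
    intro k
    have h2 : ‖e (k + 1)‖ ^ 2 ≤ ‖e k + ρ • T (w k)‖ ^ 2 := by
      have := contr k
      nlinarith [norm_nonneg (e (k + 1)), norm_nonneg (e k + ρ • T (w k))]
    have hexp : ‖e k + ρ • T (w k)‖ ^ 2
        = ‖e k‖ ^ 2 + 2 * (ρ * ⟪T (w k), e k⟫) + ρ ^ 2 * ‖T (w k)‖ ^ 2 := by
      rw [norm_add_sq_real]
      rw [real_inner_smul_right, real_inner_comm, norm_smul]
      rw [Real.norm_eq_abs, abs_of_pos hρ]
      ring
    have hTb : ‖T (w k)‖ ^ 2 ≤ γ ^ 2 * ‖w k‖ ^ 2 := by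
      have := hT (w k)
      nlinarith [norm_nonneg (T (w k)), norm_nonneg (w k)]
    have := coer k
    nlinarith
  -- D k = ‖e k‖² is antitone, bounded below → converges
  set D : ℕ → ℝ := fun k => ‖e k‖ ^ 2 with hD
  have hanti : Antitone D := by
    apply antitone_nat_of_succ_le
    intro k
    have h := decr k
    have hpos : 0 ≤ c * ‖w k‖ ^ 2 := by positivity
    simp only [hD]
    linarith
  have hbdd : BddBelow (Set.range D) := by
    refine ⟨0, ?_⟩
    rintro x ⟨k, rfl⟩
    positivity
  have hDconv : Filter.Tendsto D Filter.atTop (nhds (⨅ k, D k)) :=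
    tendsto_atTop_ciInf hanti hbdd
  have hDsucc : Filter.Tendsto (fun k => D (k + 1)) Filter.atTop (nhds (⨅ k, D k)) :=
    hDconv.comp (Filter.tendsto_add_atTop_nat 1)
  have hdiff : Filter.Tendsto (fun k => D k - D (k + 1)) Filter.atTop (nhds 0) := by
    have := hDconv.sub hDsucc
    simpa using this
  -- squeeze: ‖w k‖² → 0
  have hwsq : Filter.Tendsto (fun k => ‖w k‖ ^ 2) Filter.atTop (nhds 0) := by
    have hle : ∀ k, ‖w k‖ ^ 2 ≤ (D k - D (k + 1)) / c := by
      intro k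
      rw [le_div_iff₀ hcpos]
      have := decr k
      simp only [hD]
      nlinarith
    have hub : Filter.Tendsto (fun k => (D k - D (k + 1)) / c) Filter.atTop (nhds 0) := by
      have := hdiff.div_const c
      simpa using this
    refine squeeze_zero (fun k => by positivity) hle hub
  have hwnorm : Filter.Tendsto (fun k => ‖w k‖) Filter.atTop (nhds 0) := by
    have hsqrt : Filter.Tendsto Real.sqrt (nhds 0) (nhds 0) := by
      have := Real.continuous_sqrt.tendsto 0
      simpa using this
    have := hsqrt.comp hwsq
    convert this using 2 with k
    simp [Function.comp, Real.sqrt_sq (norm_nonneg _)]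
  have huconv : Filter.Tendsto useq Filter.atTop (nhds u) := by
    rw [tendsto_iff_norm_sub_tendsto_zero]
    exact hwnorm
  -- bound ‖e k‖ ≤ M C ‖w k‖ via right inverse of T
  have : ∃ C > 0, ∀ y : E, ∃ x : V, T x = y ∧ ‖x‖ ≤ C * ‖y‖ := by
    let T' : V →L[ℝ] E := LinearMap.toContinuousLinearMap T
    have hsurj' : Function.Surjective T' := hTsurj
    obtain ⟨C, hC, hCprop⟩ := T'.exists_preimage_norm_le hsurj'
    exact ⟨C, hC, fun y => hCprop y⟩
  obtain ⟨C, hC, hCprop⟩ := this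
  have hebound : ∀ k, ‖e k‖ ≤ M * C * ‖w k‖ := by
    intro k
    obtain ⟨v, hv, hvn⟩ := hCprop (e k)
    have h1k := key1 k v
    rw [hv, real_inner_self_eq_norm_sq] at h1k
    have hab : |a (w k) v| ≤ M * ‖w k‖ * ‖v‖ := hbound (w k) v
    have : ‖e k‖ ^ 2 ≤ M * ‖w k‖ * ‖v‖ := by
      have : ‖e k‖ ^ 2 = -(a (w k) v) := by linarith [h1k]
      rw [this]
      calc -(a (w k) v) ≤ |a (w k) v| := neg_le_abs _
        _ ≤ M * ‖w k‖ * ‖v‖ := hab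
    have h2 : ‖e k‖ ^ 2 ≤ M * ‖w k‖ * (C * ‖e k‖) := by
      have hMw : 0 ≤ M * ‖w k‖ := by positivity
      have h4 : M * ‖w k‖ * ‖v‖ ≤ M * ‖w k‖ * (C * ‖e k‖) :=
        mul_le_mul_of_nonneg_left hvn hMw
      linarith
    by_cases hz : ‖e k‖ = 0
    · rw [hz]; positivity
    · have hpos : 0 < ‖e k‖ := lt_of_le_of_ne (norm_nonneg _) (Ne.symm hz)
      have h3 : ‖e k‖ * ‖e k‖ ≤ (M * C * ‖w k‖) * ‖e k‖ := by
        have : ‖e k‖ ^ 2 = ‖e k‖ * ‖e k‖ := sq (‖e k‖) ▸ by ring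
        nlinarith [h2]
      exact le_of_mul_le_mul_right h3 hpos
  have henorm : Filter.Tendsto (fun k => ‖e k‖) Filter.atTop (nhds 0) := by
    have hub : Filter.Tendsto (fun k => M * C * ‖w k‖) Filter.atTop (nhds 0) := by
      have := hwnorm.const_mul (M * C)
      simpa using this
    exact squeeze_zero (fun k => norm_nonneg _) hebound hub
  have hlamconv : Filter.Tendsto lamseq Filter.atTop (nhds lam) := by
    rw [tendsto_iff_norm_sub_tendsto_zero]
    exact henorm
  exact ⟨huconv, hlamconv⟩
end
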